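/- For every universal tower 𝒯 = {Φ_1,…,Φ_m} in a neighbourly 2m-polytope P (m > 1) with at least 2m+3 vertices, there exists a point x̄ ∈ ℝ^{2m} that lies exactly beyond 𝒞(𝒯), i.e. x̄ is beyond every facet of P in 𝒞(𝒯) and beneath every facet of P not in 𝒞(𝒯). -/

import Mathlib

open Set

noncomputable section

/-- `Euc N` is the Euclidean space `ℝ^N`. -/
abbrev Euc (N : ℕ) : Type := EuclideanSpace ℝ (Fin N)

/-- A polytope is the convex hull of a finite point set. -/
def IsPolytope {N : ℕ} (P : Set (Euc N)) : Prop :=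
  ∃ V : Set (Euc N), V.Finite ∧ P = convexHull ℝ V

-- The dimension of a set: the dimension of its affine hull (with `pdim ∅ = -1`).
open Classical in
def pdim {N : ℕ} (A : Set (Euc N)) : ℤ :=
  if A = ∅ then -1 else (Module.finrank ℝ (affineSpan ℝ A).direction : ℤ)

/-- The vertex set of a polytope: its extreme points. -/
def verts {N : ℕ} (P : Set (Euc N)) : Set (Euc N) :=
  P.extremePoints ℝ

/-- A proper face of `P`: the intersection of `P` with a supporting hyperplane. -/
def IsProperFace {N : ℕ} (P F : Set (Euc N)) : Prop :=
  ∃ (l : Euc N →ₗ[ℝ] ℝ) (c : ℝ), l ≠ 0 ∧ (∀ x ∈ P, l x ≤ c) ∧ (∃ x ∈ P, l x = c) ∧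
    F = {x | x ∈ P ∧ l x = c}

/-- A face of `P`, where the improper faces `∅` and `P` itself are also counted as faces. -/
def IsFaceOf {N : ℕ} (P F : Set (Euc N)) : Prop :=
  F = ∅ ∨ F = P ∨ IsProperFace P F

/-- Membership in the boundary complex `𝓑(P)` (all proper faces together with `∅`). -/
def MemBoundary {N : ℕ} (P F : Set (Euc N)) : Prop :=
  F = ∅ ∨ IsProperFace P F

/-- `F` is a `k`-dimensional (proper) face of `P`. -/
def IsFaceOfDim {N : ℕ} (P F : Set (Euc N)) (k : ℤ) : Prop :=
  IsProperFace P F ∧ pdim F = k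

/-- A facet of a `d`-polytope `P` is a `(d-1)`-face. -/
def IsFacet {N : ℕ} (d : ℕ) (P F : Set (Euc N)) : Prop :=
  IsFaceOfDim P F ((d : ℤ) - 1)

/-- `P` is `k`-neighbourly: every `k` of its vertices form the vertex set of a proper face. -/
def IsKNeighbourly {N : ℕ} (P : Set (Euc N)) (k : ℕ) : Prop :=
  ∀ S ⊆ verts P, S.ncard = k → ∃ F, IsProperFace P F ∧ verts F = S

/-- `P` is a neighbourly `d`-polytope: a `d`-dimensional `⌊d/2⌋`-neighbourly polytope. -/
def IsNeighbourly {N : ℕ} (d : ℕ) (P : Set (Euc N)) : Prop :=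
  IsPolytope P ∧ pdim P = (d : ℤ) ∧ IsKNeighbourly P (d / 2)

/-- `U` is a universal `k`-face of the `d`-polytope `P`:
`conv (S ∪ U)` is a face of `P` for every `S ⊆ 𝒱(P)` with `|S| ≤ ⌊(d-k-1)/2⌋`. -/
def IsUniversalFace {N : ℕ} (d : ℕ) (P U : Set (Euc N)) (k : ℕ) : Prop :=
  IsFaceOfDim P U (k : ℤ) ∧
  ∀ S ⊆ verts P, S.ncard ≤ (d - k - 1) / 2 →
    IsProperFace P (convexHull ℝ (S ∪ U))

/-- `z` is beyond the facet `F` of `P`: the supporting hyperplane of `F` separates `z` from `P`. -/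
def Beyond {N : ℕ} (P F : Set (Euc N)) (z : Euc N) : Prop :=
  ∃ (l : Euc N →ₗ[ℝ] ℝ) (c : ℝ), l ≠ 0 ∧ (∀ x ∈ P, l x ≤ c) ∧
    F = {x | x ∈ P ∧ l x = c} ∧ c < l z

/-- `z` is beneath the facet `F` of `P`: `z` lies on the same open side of `aff F` as `P`. -/
def Beneath {N : ℕ} (P F : Set (Euc N)) (z : Euc N) : Prop :=
  ∃ (l : Euc N →ₗ[ℝ] ℝ) (c : ℝ), l ≠ 0 ∧ (∀ x ∈ P, l x ≤ c) ∧
    F = {x | x ∈ P ∧ l x = c} ∧ l z < c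

/-- `Phi x y j = Φ_j = conv {x_1, y_1, …, x_j, y_j}` (1-indexed; `Phi x y 0 = ∅`). -/
def Phi {N m : ℕ} (x y : Fin m → Euc N) (j : ℕ) : Set (Euc N) :=
  convexHull ℝ {p | ∃ i : Fin m, (i : ℕ) < j ∧ (p = x i ∨ p = y i)}

/-- `𝒯 = {Φ_1, …, Φ_m}` is a universal tower in `P`: the `x_i, y_i` are distinct vertices of `P`
and `Φ_j` is a universal `(2j-1)`-face of `P` for `1 ≤ j ≤ m`. -/
def IsUniversalTower {N : ℕ} (m : ℕ) (P : Set (Euc N)) (x y : Fin m → Euc N) : Prop :=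
  Function.Injective (Sum.elim x y) ∧
  (∀ i, x i ∈ verts P) ∧ (∀ i, y i ∈ verts P) ∧
  ∀ j, 1 ≤ j → j ≤ m → IsUniversalFace (2 * m) P (Phi x y j) (2 * j - 1)

/-- `F ∈ 𝒞(𝒯) = (𝓕_1∖𝓕_2) ∪ (𝓕_3∖𝓕_4) ∪ ⋯` where `𝓕_i` is the set of facets containing `Φ_i`
(with `𝓕_j = ∅` for `j > m`). -/
def InSewC {N : ℕ} (m : ℕ) (x y : Fin m → Euc N) (F : Set (Euc N)) : Prop :=
  ∃ i, Odd i ∧ 1 ≤ i ∧ i ≤ m ∧ Phi x y i ⊆ F ∧ (i = m ∨ ¬ Phi x y (i + 1) ⊆ F)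

/-- `z` lies exactly beyond `𝒞(𝒯)`: `z` is beyond every facet of `P` in `𝒞(𝒯)` and beneath
every facet of `P` not in `𝒞(𝒯)`. -/
def ExactlyBeyond {N : ℕ} (m : ℕ) (P : Set (Euc N)) (x y : Fin m → Euc N) (z : Euc N) : Prop :=
  ∀ F, IsFacet (2 * m) P F →
    (InSewC m x y F → Beyond P F z) ∧ (¬ InSewC m x y F → Beneath P F z)

/-- `Q` is a quotient polytope `P/G` of `P` by its face `G`, with vertex correspondence `φ`:
the face lattice of `Q` is isomorphic to the interval `{F : G ⊆ F ⊆ P}` of the face lattice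
of `P`, via vertex sets. -/
def IsQuotient {N M : ℕ} (P G : Set (Euc N)) (Q : Set (Euc M)) (φ : Euc N → Euc M) : Prop :=
  IsPolytope Q ∧ Set.BijOn φ (verts P \ verts G) (verts Q) ∧
  ∀ W ⊆ verts P \ verts G,
    ((∃ F, IsFaceOf P F ∧ G ⊆ F ∧ verts F = W ∪ verts G) ↔
     (∃ F', IsFaceOf Q F' ∧ verts F' = φ '' W))

/-- `P` and `Q` are combinatorially equivalent via the vertex bijection `ψ`:
`ψ` maps vertex sets of faces onto vertex sets of faces in both directions. -/
def CombEquiv {N M : ℕ} (P : Set (Euc N)) (Q : Set (Euc M)) (ψ : Euc N → Euc M) : Prop :=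
  Set.BijOn ψ (verts P) (verts Q) ∧
  ∀ W ⊆ verts P,
    ((∃ F, IsFaceOf P F ∧ verts F = W) ↔ (∃ F', IsFaceOf Q F' ∧ verts F' = ψ '' W))

/-- `A` is a missing face of `P` relative to the face `G`;
`IsMissingFaceRel P G` describes `ℳ(P/G)`. -/
def IsMissingFaceRel {N : ℕ} (P G A : Set (Euc N)) : Prop :=
  A ⊆ verts P \ verts G ∧
  ¬ MemBoundary P (convexHull ℝ (A ∪ G)) ∧
  ∀ A' ⊂ A, MemBoundary P (convexHull ℝ (A' ∪ G))

/-- `A ∈ ℳ(P)`, the set of missing faces of `P`. -/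
def IsMissingFace {N : ℕ} (P A : Set (Euc N)) : Prop :=
  IsMissingFaceRel P ∅ A

/-- The moment curve `t ↦ (t, t², …, t^d)` in `ℝ^d`. -/
def momentCurve (d : ℕ) (t : ℝ) : Euc d :=
  WithLp.toLp 2 (fun i : Fin d => t ^ ((i : ℕ) + 1))

/-- `C` is a cyclic `d`-polytope with `n` vertices: the convex hull of `n` distinct points
on the moment curve in `ℝ^d`. -/
def IsCyclicPolytope (d n : ℕ) (C : Set (Euc d)) : Prop :=
  ∃ t : Fin n → ℝ, Function.Injective t ∧
    C = convexHull ℝ (Set.range fun i => momentCurve d (t i)) ∧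
    (verts C).ncard = n

lemma sew_Phi_mono {N m : ℕ} (x y : Fin m → Euc N) {j j' : ℕ} (h : j ≤ j') :
    Phi x y j ⊆ Phi x y j' := by
  apply convexHull_mono
  rintro p ⟨i, hi, hp⟩
  exact ⟨i, lt_of_lt_of_le hi h, hp⟩

lemma sew_faces_finite {N : ℕ} {P : Set (Euc N)} (h : IsPolytope P) :
    {F | IsProperFace P F}.Finite := by
  classical
  obtain ⟨V, hV, rfl⟩ := h
  refine Set.Finite.subset ((hV.finite_subsets).image (fun S => convexHull ℝ S)) ?_
  rintro F ⟨l, c, hl0, hle, -, rfl⟩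
  refine ⟨V ∩ {z | l z = c}, Set.inter_subset_left, ?_⟩
  refine Set.Subset.antisymm ?_ ?_
  · apply convexHull_min
    · rintro v ⟨hvV, hvl⟩
      exact ⟨subset_convexHull ℝ V hvV, hvl⟩
    · exact (convex_convexHull ℝ V).inter (convex_hyperplane l.isLinear c)
  · rintro z ⟨hzP, hzl⟩
    rw [convexHull_eq] at hzP
    obtain ⟨ι, t, w, zf, hw0, hw1, hzV, hcm⟩ := hzP
    have hlz : ∑ i ∈ t, w i * l (zf i) = c := by
      have hz : l z = c := hzl
      rw [← hcm, Finset.centerMass_eq_of_sum_1 _ _ hw1, map_sum] at hz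
      simpa [smul_eq_mul] using hz
    have key : ∀ i ∈ t, w i ≠ 0 → l (zf i) = c := by
      by_contra hcon
      push_neg at hcon
      obtain ⟨i0, hi0, hwi0, hne⟩ := hcon
      have hlt : l (zf i0) < c :=
        lt_of_le_of_ne (hle _ (subset_convexHull ℝ V (hzV _ hi0))) hne
      have hw0' : 0 < w i0 := lt_of_le_of_ne (hw0 _ hi0) (Ne.symm hwi0)
      have hsum : ∑ i ∈ t, w i * l (zf i) < ∑ i ∈ t, w i * c := by
        refine Finset.sum_lt_sum (fun i hi => mul_le_mul_of_nonneg_left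
          (hle _ (subset_convexHull ℝ V (hzV _ hi))) (hw0 _ hi)) ⟨i0, hi0, ?_⟩
        exact mul_lt_mul_of_pos_left hlt hw0'
      rw [hlz, ← Finset.sum_mul, hw1, one_mul] at hsum
      exact lt_irrefl c hsum
    have hfil : ({i ∈ t | w i ≠ 0} : Finset ι).centerMass w zf = z := by
      rw [Finset.centerMass_filter_ne_zero]; exact hcm
    rw [← hfil]
    refine Finset.centerMass_mem_convexHull _
      (fun i hi => hw0 _ (Finset.mem_filter.mp hi).1) ?_ ?_
    · rw [Finset.sum_filter_ne_zero, hw1]; exact zero_lt_one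
    · intro i hi
      obtain ⟨hit, hwi⟩ := Finset.mem_filter.mp hi
      exact ⟨hzV _ hit, key _ hit hwi⟩

/-- For every universal tower `𝒯` in a neighbourly `2m`-polytope `P`
(`m > 1`) with at least `2m+3` vertices, there is a point `x̄ ∈ ℝ^{2m}` lying exactly
beyond `𝒞(𝒯)`. -/
theorem statement_8 {m : ℕ} (hm : 1 < m)
    (P : Set (Euc (2 * m))) (x y : Fin m → Euc (2 * m))
    (hP : IsNeighbourly (2 * m) P) (hcard : 2 * m + 3 ≤ (verts P).ncard)
    (hT : IsUniversalTower m P x y) :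
    ∃ xb : Euc (2 * m), ExactlyBeyond m P x y xb := by
  classical
  obtain ⟨hPoly, hdim, -⟩ := hP
  obtain ⟨-, hxv, hyv, -⟩ := hT
  have hPconv : Convex ℝ P := by
    obtain ⟨V, -, rfl⟩ := hPoly; exact convex_convexHull ℝ V
  have hvP : verts P ⊆ P := extremePoints_subset
  -- facets form a finite family
  have hFacFin : {F : Set (Euc (2 * m)) | IsFacet (2 * m) P F}.Finite :=
    (sew_faces_finite hPoly).subset fun F hF => hF.1
  -- choose a supporting functional for every facet
  have hLC0 : ∀ F : Set (Euc (2 * m)), ∃ l : Euc (2 * m) →ₗ[ℝ] ℝ, ∃ c : ℝ,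
      IsFacet (2 * m) P F →
        l ≠ 0 ∧ (∀ z ∈ P, l z ≤ c) ∧ F = {z | z ∈ P ∧ l z = c} := by
    intro F
    by_cases hF : IsFacet (2 * m) P F
    · obtain ⟨⟨l, c, h1, h2, -, h4⟩, -⟩ := hF
      exact ⟨l, c, fun _ => ⟨h1, h2, h4⟩⟩
    · exact ⟨0, 0, fun h => absurd h hF⟩
  choose L C hLC using hLC0
  -- an interior point of P
  have hPne : P.Nonempty := by
    by_contra h
    rw [not_nonempty_iff_eq_empty] at h
    rw [pdim, if_pos h] at hdim
    omega
  have hspan : affineSpan ℝ P = ⊤ := by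
    rw [pdim, if_neg (nonempty_iff_ne_empty.mp hPne)] at hdim
    have h1 : Module.finrank ℝ (affineSpan ℝ P).direction = 2 * m := by exact_mod_cast hdim
    have h2 : (affineSpan ℝ P).direction = ⊤ :=
      Submodule.eq_top_of_finrank_eq (by rw [h1, finrank_euclideanSpace_fin])
    exact (AffineSubspace.direction_eq_top_iff_of_nonempty
      ((affineSpan_nonempty ℝ).mpr hPne)).mp h2
  obtain ⟨c0, hc0⟩ := (hPconv.interior_nonempty_iff_affineSpan_eq_top).mpr hspan
  -- the interior point is beneath every facet
  have hbase : ∀ F, IsFacet (2 * m) P F → L F c0 < C F := by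
    intro F hF
    obtain ⟨hl0, hle, hFeq⟩ := hLC F hF
    rcases lt_or_eq_of_le (hle c0 (interior_subset hc0)) with h | h
    · exact h
    · exfalso
      obtain ⟨u, hu⟩ : ∃ u, (0:ℝ) < L F u := by
        obtain ⟨u, hu⟩ : ∃ u, L F u ≠ 0 := by
          by_contra h'; push_neg at h'; exact hl0 (LinearMap.ext h')
        rcases hu.lt_or_gt with h' | h'
        · exact ⟨-u, by simpa using h'⟩
        · exact ⟨u, h'⟩
      have hune : u ≠ 0 := by rintro rfl; simp at hu
      have hun : (0:ℝ) < ‖u‖ := norm_pos_iff.mpr hune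
      obtain ⟨r, hr, hball⟩ := Metric.isOpen_iff.mp isOpen_interior c0 hc0
      set δ : ℝ := r / (2 * ‖u‖) with hδdef
      have hδ : 0 < δ := by positivity
      have hmem : c0 + δ • u ∈ P := by
        apply interior_subset
        apply hball
        rw [Metric.mem_ball, dist_eq_norm]
        have : c0 + δ • u - c0 = δ • u := by abel
        rw [this, norm_smul, Real.norm_eq_abs, abs_of_pos hδ]
        have : δ * ‖u‖ = r / 2 := by
          rw [hδdef]; field_simp
        rw [this]; linarith
      have hle' := hle _ hmem
      rw [map_add, map_smul, h, smul_eq_mul] at hle'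
      nlinarith [mul_pos hδ hu]
  -- centroids of the Φ_j generators
  let pt : Fin m × Bool → Euc (2 * m) := fun q => if q.2 then x q.1 else y q.1
  let S : ℕ → Finset (Fin m × Bool) := fun j => Finset.univ.filter (fun q => (q.1 : ℕ) < j)
  let p : ℕ → Euc (2 * m) := fun j => (S j).centerMass (fun _ => (1:ℝ)) pt
  have hptP : ∀ q, pt q ∈ P := by
    rintro ⟨i, b⟩
    cases b
    · exact hvP (hyv i)
    · exact hvP (hxv i)
  have hptgen : ∀ j, ∀ q ∈ S j,
      pt q ∈ {g | ∃ i : Fin m, (i : ℕ) < j ∧ (g = x i ∨ g = y i)} := by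
    rintro j ⟨i, b⟩ hq
    have hij : (i : ℕ) < j := by simpa [S] using hq
    cases b
    · exact ⟨i, hij, Or.inr rfl⟩
    · exact ⟨i, hij, Or.inl rfl⟩
  have hSne : ∀ j, 1 ≤ j → (S j).Nonempty := by
    intro j hj
    exact ⟨(⟨0, by omega⟩, true), by simp [S]; omega⟩
  have hcardpos : ∀ j, 1 ≤ j → 0 < ((S j).card : ℝ) := by
    intro j hj
    exact_mod_cast Finset.card_pos.mpr (hSne j hj)
  have hsum1 : ∀ j, ∑ _q ∈ S j, (1:ℝ) = ((S j).card : ℝ) := by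
    intro j; rw [Finset.sum_const, nsmul_eq_mul, mul_one]
  have hpmem : ∀ j, 1 ≤ j → p j ∈ Phi x y j := by
    intro j hj
    exact Finset.centerMass_mem_convexHull _ (fun q _ => zero_le_one)
      (by rw [hsum1 j]; exact hcardpos j hj) (hptgen j)
  have hpP : ∀ j, 1 ≤ j → p j ∈ P := by
    intro j hj
    have : Phi x y j ⊆ P := by
      apply convexHull_min _ hPconv
      rintro g ⟨i, -, rfl | rfl⟩
      · exact hvP (hxv i)
      · exact hvP (hyv i)
    exact this (hpmem j hj)
  have hLp : ∀ (l : Euc (2 * m) →ₗ[ℝ] ℝ) j,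
      l (p j) = ((S j).card : ℝ)⁻¹ * ∑ q ∈ S j, l (pt q) := by
    intro l j
    show l ((S j).centerMass (fun _ => (1:ℝ)) pt) = _
    rw [Finset.centerMass, map_smul]
    simp [hsum1 j, smul_eq_mul, map_sum]
  -- if Φ_j is not within a supported level set, the centroid is strictly beneath
  have hstrict : ∀ j, 1 ≤ j → ∀ (l : Euc (2 * m) →ₗ[ℝ] ℝ) (c : ℝ), (∀ z ∈ P, l z ≤ c) →
      ¬ Phi x y j ⊆ {z | z ∈ P ∧ l z = c} → l (p j) < c := by
    intro j hj l c hle hΦ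
    have hall : ∀ q ∈ S j, l (pt q) ≤ c := fun q _ => hle _ (hptP q)
    have hex : ∃ q ∈ S j, l (pt q) < c := by
      by_contra h
      push_neg at h
      apply hΦ
      apply convexHull_min
      · rintro g ⟨i, hij, rfl | rfl⟩
        · have hq : ((i, true) : Fin m × Bool) ∈ S j := by simp [S, hij]
          exact ⟨hvP (hxv i), le_antisymm (hall _ hq) (h _ hq)⟩
        · have hq : ((i, false) : Fin m × Bool) ∈ S j := by simp [S, hij]
          exact ⟨hvP (hyv i), le_antisymm (hall _ hq) (h _ hq)⟩
      · exact hPconv.inter (convex_hyperplane l.isLinear c)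
    have hsum : ∑ q ∈ S j, l (pt q) < ((S j).card : ℝ) * c := by
      calc ∑ q ∈ S j, l (pt q) < ∑ _q ∈ S j, c := Finset.sum_lt_sum hall hex
      _ = ((S j).card : ℝ) * c := by rw [Finset.sum_const, nsmul_eq_mul]
    rw [hLp l j]
    have h2 := mul_lt_mul_of_pos_left hsum (inv_pos.mpr (hcardpos j hj))
    rwa [inv_mul_cancel_left₀ (ne_of_gt (hcardpos j hj))] at h2
  -- the depth index
  let T : Set (Euc (2 * m)) → ℕ := fun F => Nat.findGreatest (fun t => Phi x y t ⊆ F) m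
  have hΦ0 : ∀ F : Set (Euc (2 * m)), Phi x y 0 ⊆ F := by
    intro F
    have h0 : {g | ∃ i : Fin m, (i : ℕ) < 0 ∧ (g = x i ∨ g = y i)} = (∅ : Set (Euc (2 * m))) := by
      ext g; simp
    rw [Phi, h0, convexHull_empty]
    exact Set.empty_subset F
  have hTle : ∀ F, T F ≤ m := fun F => Nat.findGreatest_le m
  have hTspec : ∀ F, Phi x y (T F) ⊆ F := fun F =>
    Nat.findGreatest_spec (P := fun t => Phi x y t ⊆ F) (Nat.zero_le m) (hΦ0 F)
  have hTmax : ∀ F t, t ≤ m → Phi x y t ⊆ F → t ≤ T F := fun F t h1 h2 =>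
    Nat.le_findGreatest (P := fun t => Phi x y t ⊆ F) h1 h2
  -- the main downward recursion
  have key : ∀ k, k ≤ m → ∃ z : Euc (2 * m), ∀ F, IsFacet (2 * m) P F →
      ((m + 1 - k ≤ T F ∧ Even (T F - (m + 1 - k))) → C F < L F z) ∧
      (¬(m + 1 - k ≤ T F ∧ Even (T F - (m + 1 - k))) → L F z < C F) := by
    intro k
    induction k with
    | zero =>
      intro _
      refine ⟨c0, fun F hF => ⟨fun h => ?_, fun _ => hbase F hF⟩⟩
      exact absurd h.1 (by have := hTle F; omega)
    | succ k ih =>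
      intro hk1
      obtain ⟨z', hz'⟩ := ih (by omega)
      set j : ℕ := m - k with hjdef
      have hj1 : 1 ≤ j := by omega
      have hjm : j ≤ m := by omega
      have e1 : m + 1 - (k + 1) = j := by omega
      have e2 : m + 1 - k = j + 1 := by omega
      rw [e2] at hz'
      rw [e1]
      -- the beneath margin
      set Fb : Finset (Set (Euc (2 * m))) :=
        hFacFin.toFinset.filter (fun F => ¬ Phi x y j ⊆ F) with hFbdef
      set εF : Set (Euc (2 * m)) → ℝ := fun F =>
        (C F - L F (p j)) / (|C F - L F z'| + (C F - L F (p j)) + 1) with hεFdef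
      have hFbfacet : ∀ F ∈ Fb, IsFacet (2 * m) P F ∧ ¬ Phi x y j ⊆ F := by
        intro F hF
        obtain ⟨h1, h2⟩ := Finset.mem_filter.mp hF
        exact ⟨hFacFin.mem_toFinset.mp h1, h2⟩
      have ha : ∀ F ∈ Fb, 0 < C F - L F (p j) := by
        intro F hF
        obtain ⟨hFfac, hFsub⟩ := hFbfacet F hF
        obtain ⟨-, hle, hFeq⟩ := hLC F hFfac
        have := hstrict j hj1 (L F) (C F) hle (by rwa [← hFeq])
        linarith
      have hεFpos : ∀ F ∈ Fb, 0 < εF F := by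
        intro F hF
        have := ha F hF
        have habs : (0:ℝ) ≤ |C F - L F z'| := abs_nonneg _
        exact div_pos this (by linarith)
      set ε : ℝ := (insert (1:ℝ) (Fb.image εF)).min' (Finset.insert_nonempty _ _) with hεdef
      have hε0 : 0 < ε := by
        have hmem := (insert (1:ℝ) (Fb.image εF)).min'_mem (Finset.insert_nonempty _ _)
        rw [← hεdef] at hmem
        rcases Finset.mem_insert.mp hmem with h | h
        · rw [h]; exact zero_lt_one
        · obtain ⟨F, hF, hFe⟩ := Finset.mem_image.mp h
          rw [← hFe]; exact hεFpos F hF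
      have hεle : ∀ F ∈ Fb, ε ≤ εF F := by
        intro F hF
        apply Finset.min'_le
        exact Finset.mem_insert_of_mem (Finset.mem_image_of_mem εF hF)
      refine ⟨p j + ε • (p j - z'), fun F hF => ?_⟩
      obtain ⟨hl0, hle, hFeq⟩ := hLC F hF
      have hLz : L F (p j + ε • (p j - z')) = L F (p j) + ε * (L F (p j) - L F z') := by
        rw [map_add, map_smul, map_sub, smul_eq_mul]
      by_cases hjt : j ≤ T F
      · -- Φ_j ⊆ F, so L (p j) = C F
        have hΦj : Phi x y j ⊆ F := (sew_Phi_mono x y hjt).trans (hTspec F)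
        have hpF : p j ∈ F := hΦj (hpmem j hj1)
        have hLpC : L F (p j) = C F := by
          rw [hFeq] at hpF; exact hpF.2
        rw [hLpC] at hLz
        by_cases hev : Even (T F - j)
        · refine ⟨fun _ => ?_, fun h => absurd ⟨hjt, hev⟩ h⟩
          have hnot : ¬(j + 1 ≤ T F ∧ Even (T F - (j + 1))) := by
            rintro ⟨h1, h2⟩
            rw [Nat.even_iff] at hev h2
            omega
          have hz'lt : L F z' < C F := (hz' F hF).2 hnot
          rw [hLz]
          nlinarith [mul_pos hε0 (by linarith : (0:ℝ) < C F - L F z')]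
        · refine ⟨fun h => absurd h.2 hev, fun _ => ?_⟩
          have hyes : j + 1 ≤ T F ∧ Even (T F - (j + 1)) := by
            rw [Nat.even_iff] at hev ⊢
            omega
          have hz'gt : C F < L F z' := (hz' F hF).1 hyes
          rw [hLz]
          nlinarith [mul_pos hε0 (by linarith : (0:ℝ) < L F z' - C F)]
      · -- Φ_j ⊄ F : beneath
        refine ⟨fun h => absurd h.1 hjt, fun _ => ?_⟩
        have hΦnot : ¬ Phi x y j ⊆ F := fun hsub => hjt (hTmax F j hjm hsub)
        have hFb : F ∈ Fb := Finset.mem_filter.mpr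
          ⟨hFacFin.mem_toFinset.mpr hF, hΦnot⟩
        have haF := ha F hFb
        have hεF : ε ≤ (C F - L F (p j)) / (|C F - L F z'| + (C F - L F (p j)) + 1) :=
          hεle F hFb
        have hden : (0:ℝ) < |C F - L F z'| + (C F - L F (p j)) + 1 := by
          have := abs_nonneg (C F - L F z'); linarith
        have hεa : ε * (|C F - L F z'| + (C F - L F (p j)) + 1) ≤ C F - L F (p j) :=
          (le_div_iff₀ hden).mp hεF
        have h3 : ε * (|C F - L F z'| + (C F - L F (p j)) + 1)
            = ε * |C F - L F z'| + ε * (C F - L F (p j)) + ε := by ring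
        rw [h3] at hεa
        have hb1 : ε * (C F - L F z') ≤ ε * |C F - L F z'| :=
          mul_le_mul_of_nonneg_left (le_abs_self _) hε0.le
        have hεpa : 0 < ε * (C F - L F (p j)) := mul_pos hε0 haF
        have hexp : ε * (L F (p j) - L F z')
            = ε * (C F - L F z') - ε * (C F - L F (p j)) := by ring
        rw [hLz, hexp]
        linarith
  -- assemble
  obtain ⟨z, hz⟩ := key m (le_refl m)
  have em : m + 1 - m = 1 := by omega
  rw [em] at hz
  -- InSewC ↔ Odd (T F)
  have hsew : ∀ F : Set (Euc (2 * m)), InSewC m x y F ↔ Odd (T F) := by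
    intro F
    constructor
    · rintro ⟨i, hodd, hi1, him, hsub, hor⟩
      have hit : i ≤ T F := hTmax F i him hsub
      have hTi : T F = i := by
        rcases hor with rfl | hnot
        · have := hTle F; omega
        · by_contra hne
          have hlt : i + 1 ≤ T F := by omega
          exact hnot ((sew_Phi_mono x y hlt).trans (hTspec F))
      rwa [hTi]
    · intro hodd
      have h1 : 1 ≤ T F := hodd.pos
      refine ⟨T F, hodd, h1, hTle F, hTspec F, ?_⟩
      by_cases hm' : T F = m
      · exact Or.inl hm'
      · right
        intro hsub
        have := hTmax F (T F + 1) (by have := hTle F; omega) hsub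
        omega
  refine ⟨z, fun F hF => ?_⟩
  obtain ⟨hl0, hle, hFeq⟩ := hLC F hF
  constructor
  · intro hin
    have hodd := (hsew F).mp hin
    have hcond : 1 ≤ T F ∧ Even (T F - 1) := by
      rw [Nat.odd_iff] at hodd
      rw [Nat.even_iff]
      omega
    exact ⟨L F, C F, hl0, hle, hFeq, (hz F hF).1 hcond⟩
  · intro hnin
    have hnodd : ¬ Odd (T F) := fun h => hnin ((hsew F).mpr h)
    have hcond : ¬(1 ≤ T F ∧ Even (T F - 1)) := by
      rintro ⟨h1, h2⟩
      rw [Nat.odd_iff] at hnodd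
      rw [Nat.even_iff] at h2
      omega
    exact ⟨L F, C F, hl0, hle, hFeq, (hz F hF).2 hcond⟩
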